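/- For the case k = n, the drop function formula d_λ(n,x) = (Π_{y∈λ} h(y))·f_λ(n,x) holds; in particular summing over all cells x in which n can appear recovers n! = (Π_{y∈λ} h(y))·f_λ. -/

import Mathlib

open Finset

namespace NPS

def armZ (μ : YoungDiagram) (x : ℕ × ℕ) : ℤ := (μ.rowLen x.1 : ℤ) - x.2 - 1
def legZ (μ : YoungDiagram) (x : ℕ × ℕ) : ℤ := (μ.colLen x.2 : ℤ) - x.1 - 1
def hook (μ : YoungDiagram) (x : ℕ × ℕ) : ℕ := μ.rowLen x.1 + μ.colLen x.2 - x.1 - x.2 - 1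

/-- A standard Young tableau of shape `μ`, as a function `ℕ × ℕ → ℕ` that is a bijection
from the cells of `μ` onto `{1, …, n}`, is `0` outside `μ`, and strictly increases
along rows and columns. -/
def IsSYT (μ : YoungDiagram) (T : ℕ × ℕ → ℕ) : Prop :=
  Set.BijOn T ↑μ.cells (Set.Icc 1 μ.card) ∧
  (∀ x ∉ μ.cells, T x = 0) ∧
  (∀ i j : ℕ, (i, j + 1) ∈ μ → T (i, j) < T (i, j + 1)) ∧
  (∀ i j : ℕ, (i + 1, j) ∈ μ → T (i, j) < T (i + 1, j))

/-- The number of standard Young tableaux of shape `μ` with entry `k` in cell `x`. -/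
noncomputable def fc (μ : YoungDiagram) (x : ℕ × ℕ) (k : ℕ) : ℕ :=
  Nat.card {T : ℕ × ℕ → ℕ // IsSYT μ T ∧ T x = k}

/-- The number of standard Young tableaux of shape `μ`. -/
noncomputable def fS (μ : YoungDiagram) : ℕ := Nat.card {T : ℕ × ℕ → ℕ // IsSYT μ T}

section Aux
open Polynomial


noncomputable def keyP (s : Finset ℚ) : ℚ[X] :=
  X * (∏ b ∈ s, (X - C (b+1))) - (X - C (s.card : ℚ)) * ∏ b ∈ s, (X - C b)

theorem keyP_insert (a : ℚ) (s : Finset ℚ) (ha : a ∉ s) :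
    keyP (insert a s) = (X - C (a+1)) * keyP s + C ((s.card : ℚ) - a) * ∏ b ∈ s, (X - C b) := by
  simp only [keyP, prod_insert ha, card_insert_of_notMem ha]
  push_cast
  simp only [C_add, C_sub, C_1]
  ring

theorem keyP_coeff (s : Finset ℚ) :
    (∀ k, s.card ≤ k → (keyP s).coeff k = 0) ∧
      (keyP s).coeff (s.card - 1) = (s.card.choose 2 : ℚ) - ∑ b ∈ s, b := by
  classical
  induction s using Finset.induction_on with
  | empty => simp [keyP]
  | @insert a s ha ih =>
    have hp : (∏ b ∈ s, (X - C b) : ℚ[X]).natDegree = s.card := by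
      simpa using natDegree_prod_of_monic s (fun b => X - C b) (fun b _ => monic_X_sub_C b)
    have hpm : (∏ b ∈ s, (X - C b) : ℚ[X]).Monic :=
      monic_prod_of_monic _ _ (fun b _ => monic_X_sub_C b)
    have hcard : (insert a s).card = s.card + 1 := card_insert_of_notMem ha
    rw [keyP_insert a s ha]
    have hXmul : ∀ k, 1 ≤ k → (X * keyP s).coeff k = (keyP s).coeff (k-1) := by
      intro k hk
      obtain ⟨k', rfl⟩ : ∃ k', k = k' + 1 := ⟨k - 1, by omega⟩
      simp [coeff_X_mul]
    constructor
    · intro k hk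
      rw [hcard] at hk
      simp only [coeff_add, coeff_C_mul, sub_mul, coeff_sub]
      rw [hXmul k (by omega), ih.1 (k-1) (by omega), ih.1 k (by omega),
        coeff_eq_zero_of_natDegree_lt (by omega : (∏ b ∈ s, (X - C b) : ℚ[X]).natDegree < k)]
      ring
    · rcases Nat.eq_zero_or_pos s.card with h0 | hpos
      · obtain rfl : s = ∅ := card_eq_zero.mp h0
        simp [keyP]
      · rw [hcard]
        simp only [Nat.add_sub_cancel, coeff_add, coeff_C_mul, sub_mul, coeff_sub]
        rw [hXmul s.card hpos, ih.1 s.card le_rfl, ih.2, sum_insert ha]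
        have hmono : (∏ b ∈ s, (X - C b) : ℚ[X]).coeff s.card = 1 := by
          have := hpm.coeff_natDegree
          rwa [hp] at this
        rw [hmono]
        have hch : (s.card + 1).choose 2 = s.card.choose 2 + s.card := by
          rw [Nat.choose_succ_succ]
          simp [Nat.choose_one_right, Nat.add_comm]
        rw [hch]
        push_cast
        ring


theorem coeff_card_pred_of_degree_lt (s : Finset ℚ) (f : ℚ[X]) (hf : f.degree < s.card) :
    f.coeff (s.card - 1) = ∑ a ∈ s, (∏ b ∈ s.erase a, (a - b)⁻¹) * f.eval a := by
  classical
  have hvs : Set.InjOn (id : ℚ → ℚ) s := Function.injective_id.injOn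
  have hrep := Lagrange.eq_interpolate hvs (f := f) (by simpa using hf)
  conv_lhs => rw [hrep]
  rw [Lagrange.interpolate_apply, finset_sum_coeff]
  refine sum_congr rfl fun a ha => ?_
  have hbasis : Lagrange.basis s id a = C (Lagrange.nodalWeight s id a) *
      Lagrange.nodal (s.erase a) id := by
    rw [Lagrange.basis_eq_prod_sub_inv_mul_nodal_div ha, Lagrange.nodal_erase_eq_nodal_div ha]
  have hmonic : (Lagrange.nodal (s.erase a) id).Monic := Lagrange.nodal_monic
  have hdeg : (Lagrange.nodal (s.erase a) id).natDegree = s.card - 1 := by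
    rw [Lagrange.natDegree_nodal, card_erase_of_mem ha]
  have hc1 : (Lagrange.nodal (s.erase a) id).coeff (s.card - 1) = 1 := by
    have := hmonic.coeff_natDegree; rwa [hdeg] at this
  rw [hbasis, coeff_C_mul, coeff_C_mul, hc1, mul_one, Lagrange.nodalWeight]
  simp [mul_comm]

theorem sum_ratio_eq (s : Finset ℚ) :
    ∑ a ∈ s, a * ∏ b ∈ s.erase a, ((a - b - 1) * (a - b)⁻¹)
      = (∑ b ∈ s, b) - ((s.card.choose 2 : ℕ) : ℚ) := by
  classical
  have hdeg : (keyP s).degree < s.card := by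
    rw [degree_lt_iff_coeff_zero]
    intro m hm
    exact (keyP_coeff s).1 m (by exact_mod_cast hm)
  have heval : ∀ a ∈ s, (keyP s).eval a = -(a * ∏ b ∈ s.erase a, (a - b - 1)) := by
    intro a ha
    simp only [keyP, eval_sub, eval_mul, eval_X, eval_C, eval_prod]
    have h2 : ∏ b ∈ s, (a - b) = 0 := prod_eq_zero ha (sub_self a)
    have h1 : ∏ b ∈ s, (a - (b+1)) = (∏ b ∈ s.erase a, (a - b - 1)) * (-1) := by
      rw [← Finset.prod_erase_mul s _ ha, show a - (a+1) = -1 by ring]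
      exact congrArg (· * (-1)) (prod_congr rfl fun b _ => by ring)
    rw [h2, h1]
    ring
  have hco := coeff_card_pred_of_degree_lt s (keyP s) hdeg
  rw [(keyP_coeff s).2] at hco
  have hco2 : ((s.card.choose 2 : ℕ) : ℚ) - ∑ b ∈ s, b
      = -∑ a ∈ s, a * ∏ b ∈ s.erase a, ((a - b - 1) * (a - b)⁻¹) := by
    rw [hco, ← sum_neg_distrib]
    refine sum_congr rfl fun a ha => ?_
    rw [heval a ha, prod_mul_distrib]
    ring
  linarith [hco2]

/-- Vandermonde-type product over indices `i < j < M`. -/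
def Dl (M : ℕ) (v : ℕ → ℚ) : ℚ := ∏ j ∈ range M, ∏ i ∈ range j, (v i - v j)

theorem erase_range_eq (M r : ℕ) (hr : r < M) :
    (range M).erase r = range r ∪ Ico (r+1) M := by
  ext x
  simp only [mem_erase, mem_range, mem_union, mem_Ico]
  omega

theorem prod_erase_range (M r : ℕ) (hr : r < M) (g : ℕ → ℚ) :
    ∏ j ∈ (range M).erase r, g j = (∏ j ∈ range r, g j) * ∏ j ∈ Ico (r+1) M, g j := by
  rw [erase_range_eq M r hr, prod_union]
  rw [Finset.disjoint_left]
  intro x hx hx'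
  simp only [mem_range] at hx
  simp only [mem_Ico] at hx'
  omega

theorem Dl_split (M r : ℕ) (hr : r < M) (w : ℕ → ℚ) :
    Dl M w = ((∏ i ∈ range r, (w i - w r)) * ∏ j ∈ Ico (r+1) M, (w r - w j)) *
      ((∏ j ∈ range r, ∏ i ∈ range j, (w i - w j)) *
        ∏ j ∈ Ico (r+1) M, ∏ i ∈ (range j).erase r, (w i - w j)) := by
  have h1 : Dl M w = (∏ j ∈ range (r+1), ∏ i ∈ range j, (w i - w j)) *
      ∏ j ∈ Ico (r+1) M, ∏ i ∈ range j, (w i - w j) := by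
    rw [Dl, ← prod_range_mul_prod_Ico _ (by omega : r + 1 ≤ M)]
  rw [h1, prod_range_succ]
  have h2 : ∀ j ∈ Ico (r+1) M, ∏ i ∈ range j, (w i - w j)
      = (w r - w j) * ∏ i ∈ (range j).erase r, (w i - w j) := by
    intro j hj
    rw [mem_Ico] at hj
    exact (mul_prod_erase _ _ (mem_range.mpr (by omega))).symm
  rw [prod_congr rfl h2, prod_mul_distrib]
  ring

theorem Dl_ratio (M r : ℕ) (hr : r < M) (v : ℕ → ℚ) :
    Dl M (fun i => if i = r then v r - 1 else v i) * ∏ j ∈ (range M).erase r, (v r - v j)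
      = Dl M v * ∏ j ∈ (range M).erase r, (v r - v j - 1) := by
  set w : ℕ → ℚ := fun i => if i = r then v r - 1 else v i with hw
  have hwr : w r = v r - 1 := by simp [hw]
  have hwo : ∀ i, i ≠ r → w i = v i := by intro i hi; simp [hw, hi]
  have hE1 : ∏ j ∈ range r, ∏ i ∈ range j, (w i - w j)
      = ∏ j ∈ range r, ∏ i ∈ range j, (v i - v j) := by
    refine prod_congr rfl fun j hj => prod_congr rfl fun i hi => ?_
    rw [mem_range] at hj hi
    rw [hwo i (by omega), hwo j (by omega)]
  have hE2 : ∏ j ∈ Ico (r+1) M, ∏ i ∈ (range j).erase r, (w i - w j)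
      = ∏ j ∈ Ico (r+1) M, ∏ i ∈ (range j).erase r, (v i - v j) := by
    refine prod_congr rfl fun j hj => prod_congr rfl fun i hi => ?_
    rw [mem_Ico] at hj; rw [mem_erase] at hi
    rw [hwo i hi.1, hwo j (by omega)]
  have hBw : ∏ i ∈ range r, (w i - w r) = ∏ i ∈ range r, (v i - v r + 1) := by
    refine prod_congr rfl fun i hi => ?_
    rw [mem_range] at hi
    rw [hwo i (by omega), hwr]; ring
  have hCw : ∏ j ∈ Ico (r+1) M, (w r - w j) = ∏ j ∈ Ico (r+1) M, (v r - v j - 1) := by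
    refine prod_congr rfl fun j hj => ?_
    rw [mem_Ico] at hj
    rw [hwo j (by omega), hwr]; ring
  have prod_neg : ∀ (t : Finset ℕ) (g : ℕ → ℚ),
      ∏ i ∈ t, (-(g i)) = (-1)^t.card * ∏ i ∈ t, g i := by
    intro t g
    rw [show (fun i => -(g i)) = fun i => (-1 : ℚ) * g i from funext fun i => by ring]
    rw [prod_mul_distrib, prod_const]
  have hsign1 : ∏ i ∈ range r, (v i - v r + 1) = (-1)^r * ∏ i ∈ range r, (v r - v i - 1) := by
    rw [← prod_congr rfl (fun i (_ : i ∈ range r) => (by ring : -(v r - v i - 1) = v i - v r + 1)),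
      prod_neg, card_range]
  have hsign2 : ∏ i ∈ range r, (v i - v r) = (-1)^r * ∏ i ∈ range r, (v r - v i) := by
    rw [← prod_congr rfl (fun i (_ : i ∈ range r) => (by ring : -(v r - v i) = v i - v r)),
      prod_neg, card_range]
  rw [Dl_split M r hr w, Dl_split M r hr v, hE1, hE2, hBw, hCw,
    prod_erase_range M r hr, prod_erase_range M r hr, hsign1, hsign2]
  ring

theorem star_identity (M : ℕ) (v : ℕ → ℚ) (hinj : Set.InjOn v (range M)) :
    ∑ r ∈ range M, v r * Dl M (fun i => if i = r then v r - 1 else v i)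
      = ((∑ i ∈ range M, v i) - ((M.choose 2 : ℕ) : ℚ)) * Dl M v := by
  classical
  have hinj' : ∀ a ∈ range M, ∀ b ∈ range M, v a = v b → a = b :=
    fun a ha b hb h => hinj (mem_coe.mpr ha) (mem_coe.mpr hb) h
  set s : Finset ℚ := (range M).image v with hs
  have hcard : s.card = M := by
    rw [hs, card_image_of_injOn hinj, card_range]
  have herase : ∀ r ∈ range M, s.erase (v r) = ((range M).erase r).image v := by
    intro r hr
    ext b
    constructor
    · intro hb
      obtain ⟨hne, hbs⟩ := mem_erase.mp hb
      obtain ⟨j, hj, rfl⟩ := mem_image.mp hbs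
      exact mem_image.mpr ⟨j, mem_erase.mpr ⟨fun h => hne (h ▸ rfl), hj⟩, rfl⟩
    · intro hb
      obtain ⟨j, hj, rfl⟩ := mem_image.mp hb
      rw [mem_erase] at hj
      exact mem_erase.mpr ⟨fun h => hj.1 (hinj' j hj.2 r hr h),
        mem_image.mpr ⟨j, hj.2, rfl⟩⟩
  have hratio := sum_ratio_eq s
  rw [hcard, hs, sum_image hinj'] at hratio
  have hterm : ∀ r ∈ range M,
      v r * ∏ b ∈ ((range M).image v).erase (v r), ((v r - b - 1) * (v r - b)⁻¹)
        = v r * ∏ j ∈ (range M).erase r, ((v r - v j - 1) * (v r - v j)⁻¹) := by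
    intro r hr
    rw [← hs, herase r hr, prod_image]
    intro a ha b hb h
    exact hinj' a (mem_of_mem_erase ha) b (mem_of_mem_erase hb) h
  rw [sum_congr rfl hterm, sum_image hinj'] at hratio
  have hterm2 : ∀ r ∈ range M,
      v r * Dl M (fun i => if i = r then v r - 1 else v i)
        = Dl M v * (v r * ∏ j ∈ (range M).erase r, ((v r - v j - 1) * (v r - v j)⁻¹)) := by
    intro r hr
    have hne : ∀ j ∈ (range M).erase r, v r - v j ≠ 0 := by
      intro j hj
      rw [mem_erase] at hj
      exact sub_ne_zero_of_ne fun h => hj.1 (hinj' j hj.2 r hr h.symm)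
    have hP : ∏ j ∈ (range M).erase r, (v r - v j) ≠ 0 := prod_ne_zero_iff.mpr hne
    have h2 : Dl M (fun i => if i = r then v r - 1 else v i)
        = Dl M v * ∏ j ∈ (range M).erase r, ((v r - v j - 1) * (v r - v j)⁻¹) := by
      apply mul_right_cancel₀ hP
      rw [Dl_ratio M r (mem_range.mp hr) v, prod_mul_distrib, prod_inv_distrib]
      field_simp
    rw [h2]; ring
  rw [sum_congr rfl hterm2, ← mul_sum, hratio, mul_comm]


/-- Erase a corner cell from a Young diagram. -/
def eraseC (μ : YoungDiagram) (c : ℕ × ℕ) (h1 : (c.1 + 1, c.2) ∉ μ) (h2 : (c.1, c.2 + 1) ∉ μ) :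
    YoungDiagram where
  cells := μ.cells.erase c
  isLowerSet := by
    intro a b hab ha
    simp only [Finset.coe_erase, Set.mem_diff, Set.mem_singleton_iff] at ha ⊢
    obtain ⟨haμ, hac⟩ := ha
    refine ⟨μ.isLowerSet hab haμ, ?_⟩
    rintro rfl
    have h1' : b.1 ≤ a.1 := hab.1
    have h2' : b.2 ≤ a.2 := hab.2
    have haμ' : (a.1, a.2) ∈ μ := by simpa using haμ
    rcases Nat.lt_or_ge b.1 a.1 with h | h
    · exact h1 (μ.up_left_mem (by omega) h2' haμ')
    · rcases Nat.lt_or_ge b.2 a.2 with h' | h'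
      · exact h2 (μ.up_left_mem h1' (by omega) haμ')
      · exact hac (le_antisymm hab (Prod.mk_le_mk.mpr ⟨h, h'⟩)).symm

theorem mem_eraseC {μ : YoungDiagram} {c x : ℕ × ℕ} {h1 h2} :
    x ∈ eraseC μ c h1 h2 ↔ x ∈ μ ∧ x ≠ c := by
  change x ∈ μ.cells.erase c ↔ _
  simp only [eraseC, YoungDiagram.mem_mk, Finset.mem_erase, YoungDiagram.mem_cells]
  tauto

theorem card_eraseC {μ : YoungDiagram} {c : ℕ × ℕ} {h1 h2} (hc : c ∈ μ) :
    (eraseC μ c h1 h2).card = μ.card - 1 := by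
  simp only [eraseC, YoungDiagram.card]
  exact Finset.card_erase_of_mem hc

theorem rowLen_eq_of_iff {μ : YoungDiagram} {i t : ℕ} (h : ∀ j, (i, j) ∈ μ ↔ j < t) :
    μ.rowLen i = t := by
  have h1 := (YoungDiagram.mem_iff_lt_rowLen (μ := μ) (i := i) (j := t)).symm.trans (h t)
  have h2 := (YoungDiagram.mem_iff_lt_rowLen (μ := μ) (i := i) (j := μ.rowLen i)).symm.trans
    (h (μ.rowLen i))
  omega

theorem corner_rowLen {μ : YoungDiagram} {c : ℕ × ℕ} (hc : c ∈ μ) (h2 : (c.1, c.2 + 1) ∉ μ) :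
    μ.rowLen c.1 = c.2 + 1 := by
  rw [YoungDiagram.mem_iff_lt_rowLen] at hc h2
  · omega

theorem rowLen_eraseC {μ : YoungDiagram} {c : ℕ × ℕ} {h1 h2} (hc : c ∈ μ) (i : ℕ) :
    (eraseC μ c h1 h2).rowLen i = if i = c.1 then c.2 else μ.rowLen i := by
  split_ifs with h
  · subst h
    apply rowLen_eq_of_iff
    intro j
    rw [mem_eraseC, YoungDiagram.mem_iff_lt_rowLen, corner_rowLen hc h2]
    constructor
    · rintro ⟨hj, hne⟩
      rcases Nat.lt_or_ge j c.2 with h | h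
      · exact h
      · have hj2 : j = c.2 := by omega
        subst hj2
        exact absurd Prod.mk.eta hne
    · intro hj
      refine ⟨by omega, fun hh => ?_⟩
      have := congrArg Prod.snd hh
      simp only at this
      omega
  · apply rowLen_eq_of_iff
    intro j
    rw [mem_eraseC, YoungDiagram.mem_iff_lt_rowLen]
    constructor
    · exact fun hj => hj.1
    · exact fun hj => ⟨hj, fun hh => h (congrArg Prod.fst hh)⟩

theorem colLen_zero_eraseC_le {μ : YoungDiagram} {c : ℕ × ℕ} {h1 h2} :
    (eraseC μ c h1 h2).colLen 0 ≤ μ.colLen 0 := by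
  by_contra h
  push_neg at h
  have : (μ.colLen 0, 0) ∈ eraseC μ c h1 h2 := YoungDiagram.mem_iff_lt_colLen.mpr h
  rw [mem_eraseC] at this
  have := YoungDiagram.mem_iff_lt_colLen.mp this.1
  omega

theorem row_mem_lt {μ : YoungDiagram} {x : ℕ × ℕ} (hx : x ∈ μ) : x.1 < μ.colLen 0 := by
  rw [← YoungDiagram.mem_iff_lt_colLen]
  exact μ.up_left_mem le_rfl (Nat.zero_le _) (by rwa [Prod.mk.eta])

theorem cells_eq_biUnion (μ : YoungDiagram) (M : ℕ) (hM : μ.colLen 0 ≤ M) :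
    μ.cells = (range M).biUnion (fun i => {i} ×ˢ range (μ.rowLen i)) := by
  ext ⟨i, j⟩
  simp only [mem_biUnion, mem_product, mem_singleton, mem_range, YoungDiagram.mem_cells]
  constructor
  · intro h
    exact ⟨i, by have := row_mem_lt h; omega,
      rfl, YoungDiagram.mem_iff_lt_rowLen.mp h⟩
  · rintro ⟨i', _, rfl, hj⟩
    exact YoungDiagram.mem_iff_lt_rowLen.mpr hj

theorem card_eq_sum_rowLen (μ : YoungDiagram) (M : ℕ) (hM : μ.colLen 0 ≤ M) :
    μ.card = ∑ i ∈ range M, μ.rowLen i := by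
  rw [YoungDiagram.card, cells_eq_biUnion μ M hM, card_biUnion]
  · exact sum_congr rfl fun i _ => by simp
  · intro a _ b _ hab
    simp only [Finset.disjoint_left, mem_product, mem_singleton]
    rintro ⟨x, y⟩ ⟨rfl, _⟩ ⟨h, _⟩
    exact hab h

theorem prod_cells_eq (μ : YoungDiagram) (M : ℕ) (hM : μ.colLen 0 ≤ M) (f : ℕ × ℕ → ℚ) :
    ∏ y ∈ μ.cells, f y = ∏ i ∈ range M, ∏ j ∈ range (μ.rowLen i), f (i, j) := by
  rw [cells_eq_biUnion μ M hM, prod_biUnion]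
  · refine prod_congr rfl fun i _ => ?_
    rw [Finset.singleton_product, prod_map]
    rfl
  · intro a _ b _ hab
    simp only [Finset.disjoint_left, mem_product, mem_singleton]
    rintro ⟨x, y⟩ ⟨rfl, _⟩ ⟨h, _⟩
    exact hab h

/-- `L`-value (first-column hook length w.r.t. an `M`-row bounding box). -/
def Ln (μ : YoungDiagram) (M i : ℕ) : ℕ := μ.rowLen i + (M - 1 - i)

theorem Ln_strict_anti {μ : YoungDiagram} {M i k : ℕ} (hik : i < k) (hk : k < M) :
    Ln μ M k < Ln μ M i := by
  have := μ.rowLen_anti i k (le_of_lt hik)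
  unfold Ln
  omega

theorem hook_eq {μ : YoungDiagram} {i j : ℕ} (h : (i, j) ∈ μ) :
    hook μ (i, j) + i + j + 1 = μ.rowLen i + μ.colLen j := by
  have h1 := YoungDiagram.mem_iff_lt_rowLen.mp h
  have h2 := YoungDiagram.mem_iff_lt_colLen.mp h
  unfold hook
  simp only
  omega

theorem row_factorial (μ : YoungDiagram) (M : ℕ) (hM : μ.colLen 0 ≤ M) (i : ℕ) (hi : i < M) :
    (∏ j ∈ range (μ.rowLen i), hook μ (i, j)) * ∏ k ∈ Ico (i+1) M, (Ln μ M i - Ln μ M k)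
      = (Ln μ M i).factorial := by
  classical
  set L := Ln μ M i with hL
  have hmemμ : ∀ j, j < μ.rowLen i → (i, j) ∈ μ := fun j hj =>
    YoungDiagram.mem_iff_lt_rowLen.mpr hj
  -- hooks in the row are distinct and in [1, L]
  have hook_bounds : ∀ j, j < μ.rowLen i → 1 ≤ hook μ (i, j) ∧ hook μ (i, j) ≤ L := by
    intro j hj
    have h := hook_eq (hmemμ j hj)
    have h2 := YoungDiagram.mem_iff_lt_colLen.mp (hmemμ j hj)
    have h3 : μ.colLen j ≤ μ.colLen 0 := μ.colLen_anti 0 j (Nat.zero_le _)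
    unfold Ln at hL
    omega
  have hook_anti : ∀ j j', j < j' → j' < μ.rowLen i → hook μ (i, j') < hook μ (i, j) := by
    intro j j' hjj hj'
    have e1 := hook_eq (hmemμ j (by omega))
    have e2 := hook_eq (hmemμ j' hj')
    have h3 : μ.colLen j' ≤ μ.colLen j := μ.colLen_anti j j' (le_of_lt hjj)
    omega
  -- the `B`-values
  have hBval : ∀ k, i < k → k < M → 1 ≤ L - Ln μ M k ∧ L - Ln μ M k ≤ L := by
    intro k h1 h2
    have := Ln_strict_anti (μ := μ) h1 h2
    omega
  have hBanti : ∀ k k', i < k → k < k' → k' < M → L - Ln μ M k < L - Ln μ M k' := by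
    intro k k' h1 h2 h3
    have l1 := Ln_strict_anti (μ := μ) h2 h3
    have l2 := Ln_strict_anti (μ := μ) h1 (by omega : k < M)
    omega
  -- disjointness
  have hdisj : ∀ j k, j < μ.rowLen i → i < k → k < M → hook μ (i, j) ≠ L - Ln μ M k := by
    intro j k hj hik hkM heq
    have e1 := hook_eq (hmemμ j hj)
    have hanti : μ.rowLen k ≤ μ.rowLen i := μ.rowLen_anti i k (le_of_lt hik)
    have hLk' : Ln μ M k = μ.rowLen k + (M-1-k) := rfl
    have hL' : L = μ.rowLen i + (M-1-i) := hL
    by_cases hkj : (k, j) ∈ μ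
    · have b1 := YoungDiagram.mem_iff_lt_rowLen.mp hkj
      have b2 := YoungDiagram.mem_iff_lt_colLen.mp hkj
      omega
    · have b1 : ¬ j < μ.rowLen k := fun hh => hkj (YoungDiagram.mem_iff_lt_rowLen.mpr hh)
      have b2 : ¬ k < μ.colLen j := fun hh => hkj (YoungDiagram.mem_iff_lt_colLen.mpr hh)
      omega
  set A : Finset ℕ := (range (μ.rowLen i)).image (fun j => hook μ (i, j)) with hA
  set B : Finset ℕ := (Ico (i+1) M).image (fun k => L - Ln μ M k) with hB
  have hinjA : Set.InjOn (fun j => hook μ (i, j)) (range (μ.rowLen i)) := by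
    intro a ha b hb hab
    simp only [coe_range, Set.mem_Iio] at ha hb
    simp only at hab
    rcases Nat.lt_trichotomy a b with h | h | h
    · exact absurd hab (by have := hook_anti a b h hb; omega)
    · exact h
    · exact absurd hab (by have := hook_anti b a h ha; omega)
  have hinjB : Set.InjOn (fun k => L - Ln μ M k) (Ico (i+1) M) := by
    intro a ha b hb hab
    simp only [coe_Ico, Set.mem_Ico] at ha hb
    simp only at hab
    rcases Nat.lt_trichotomy a b with h | h | h
    · exact absurd hab (by have := hBanti a b (by omega) h hb.2; omega)
    · exact h
    · exact absurd hab (by have := hBanti b a (by omega) h ha.2; omega)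
  have hcardA : A.card = μ.rowLen i := by
    rw [hA, Finset.card_image_of_injOn hinjA, card_range]
  have hcardB : B.card = M - (i+1) := by
    rw [hB, Finset.card_image_of_injOn hinjB, Nat.card_Ico]
  have hABdisj : Disjoint A B := by
    rw [Finset.disjoint_left]
    intro a haA haB
    obtain ⟨j, hj, rfl⟩ := Finset.mem_image.mp haA
    obtain ⟨k, hk, hk2⟩ := Finset.mem_image.mp haB
    rw [mem_range] at hj
    rw [mem_Ico] at hk
    exact hdisj j k hj hk.1 hk.2 hk2.symm
  have hsub : A ∪ B ⊆ Icc 1 L := by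
    intro a ha
    rw [Finset.mem_union] at ha
    rw [Finset.mem_Icc]
    rcases ha with ha | ha
    · obtain ⟨j, hj, rfl⟩ := Finset.mem_image.mp ha
      exact hook_bounds j (mem_range.mp hj)
    · obtain ⟨k, hk, rfl⟩ := Finset.mem_image.mp ha
      rw [mem_Ico] at hk
      exact hBval k hk.1 hk.2
  have hcardU : (A ∪ B).card = L := by
    rw [Finset.card_union_of_disjoint hABdisj, hcardA, hcardB]
    unfold Ln at hL
    omega
  have hUeq : A ∪ B = Icc 1 L := by
    apply Finset.eq_of_subset_of_card_le hsub
    rw [Nat.card_Icc, hcardU]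
    omega
  have hprodIcc : ∏ a ∈ Icc 1 L, a = L.factorial := by
    induction L with
    | zero => simp
    | succ n ihn =>
      rw [Finset.prod_Icc_succ_top (by omega), ihn, Nat.factorial_succ, Nat.mul_comm]
  rw [← hprodIcc, ← hUeq, Finset.prod_union hABdisj]
  congr 1
  · rw [hA, Finset.prod_image hinjA]
  · rw [hB, Finset.prod_image hinjB]

def Lq (μ : YoungDiagram) (M : ℕ) (i : ℕ) : ℚ := ((Ln μ M i : ℕ) : ℚ)

theorem Dl_Lq_eq (μ : YoungDiagram) (M : ℕ) :
    Dl M (Lq μ M) = ∏ i ∈ range M, ∏ k ∈ Ico (i+1) M, ((Ln μ M i - Ln μ M k : ℕ) : ℚ) := by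
  rw [Dl, prod_comm' (t' := range M) (s' := fun i => Ico (i+1) M)
    (fun x y => by simp only [mem_range, mem_Ico]; omega)]
  refine prod_congr rfl fun i hi => prod_congr rfl fun k hk => ?_
  rw [mem_range] at hi
  rw [mem_Ico] at hk
  have := Ln_strict_anti (μ := μ) (M := M) (i := i) (k := k) (by omega) hk.2
  rw [Lq, Lq, Nat.cast_sub (by omega)]

theorem hook_prod_Dl (μ : YoungDiagram) (M : ℕ) (hM : μ.colLen 0 ≤ M) :
    (∏ y ∈ μ.cells, (hook μ y : ℚ)) * Dl M (Lq μ M)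
      = ∏ i ∈ range M, ((Ln μ M i).factorial : ℚ) := by
  rw [prod_cells_eq μ M hM (fun y => (hook μ y : ℚ)), Dl_Lq_eq, ← prod_mul_distrib]
  refine prod_congr rfl fun i hi => ?_
  rw [mem_range] at hi
  have := row_factorial μ M hM i hi
  push_cast [← this]
  ring

theorem Dl_Lq_pos (μ : YoungDiagram) (M : ℕ) : 0 < Dl M (Lq μ M) := by
  rw [Dl]
  refine prod_pos fun j hj => prod_pos fun i hi => ?_
  rw [mem_range] at hj hi
  have := Ln_strict_anti (μ := μ) (M := M) (i := i) (k := j) hi hj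
  rw [Lq, Lq, sub_pos]
  exact_mod_cast this

theorem Lq_injOn (μ : YoungDiagram) (M : ℕ) : Set.InjOn (Lq μ M) (range M) := by
  intro a ha b hb hab
  simp only [coe_range, Set.mem_Iio] at ha hb
  rcases Nat.lt_trichotomy a b with h | h | h
  · have := Ln_strict_anti (μ := μ) (M := M) h hb
    rw [Lq, Lq] at hab
    exact absurd hab (by exact_mod_cast Nat.ne_of_gt this)
  · exact h
  · have := Ln_strict_anti (μ := μ) (M := M) h ha
    rw [Lq, Lq] at hab
    exact absurd hab (by exact_mod_cast Nat.ne_of_lt this)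

theorem sum_Lq (μ : YoungDiagram) (M : ℕ) (hM : μ.colLen 0 ≤ M) :
    ∑ i ∈ range M, Lq μ M i = (μ.card : ℚ) + ((M.choose 2 : ℕ) : ℚ) := by
  have h1 : ∑ i ∈ range M, Ln μ M i = μ.card + M.choose 2 := by
    unfold Ln
    rw [sum_add_distrib, ← card_eq_sum_rowLen μ M hM]
    congr 1
    have h2 : ∑ i ∈ range M, (M - 1 - i) = ∑ i ∈ range M, i :=
      Finset.sum_range_reflect (fun i => i) M
    rw [h2]
    have := Finset.sum_range_id_mul_two M
    have := Nat.choose_two_right M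
    omega
  have : ∑ i ∈ range M, Lq μ M i = ((∑ i ∈ range M, Ln μ M i : ℕ) : ℚ) := by
    rw [Nat.cast_sum]
    rfl
  rw [this, h1]
  push_cast
  ring

section SYT

theorem finite_syt (μ : YoungDiagram) : Finite {T : ℕ × ℕ → ℕ // IsSYT μ T} := by
  have : Finite ↥(Set.Icc 1 μ.card) := (Set.finite_Icc 1 μ.card).to_subtype
  let F : {T : ℕ × ℕ → ℕ // IsSYT μ T} → (↑μ.cells → ↥(Set.Icc 1 μ.card)) :=
    fun T y => ⟨T.1 y, T.2.1.mapsTo (Finset.mem_coe.mpr y.2)⟩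
  refine Finite.of_injective F fun T T' h => Subtype.ext (funext fun x => ?_)
  by_cases hx : x ∈ μ.cells
  · exact congrArg Subtype.val (congrFun h ⟨x, hx⟩)
  · rw [T.2.2.1 x hx, T'.2.2.1 x hx]

theorem finite_syt' (μ : YoungDiagram) (x : ℕ × ℕ) (k : ℕ) :
    Finite {T : ℕ × ℕ → ℕ // IsSYT μ T ∧ T x = k} := by
  haveI := finite_syt μ
  refine Finite.of_injective
    (fun T => (⟨T.1, T.2.1⟩ : {T : ℕ × ℕ → ℕ // IsSYT μ T})) ?_
  intro T T' h
  rw [Subtype.mk.injEq] at h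
  exact Subtype.ext h

theorem fS_of_card_zero (μ : YoungDiagram) (h : μ.card = 0) : fS μ = 1 := by
  have hc : μ.cells = ∅ := Finset.card_eq_zero.mp h
  have key : ∀ T : ℕ × ℕ → ℕ, IsSYT μ T ↔ T = fun _ => 0 := by
    intro T
    constructor
    · intro hT
      funext x
      exact hT.2.1 x (by simp [hc])
    · rintro rfl
      refine ⟨?_, fun _ _ => rfl, fun i j hj => absurd hj (by simp [YoungDiagram.mem_cells] at *; simp [← YoungDiagram.mem_cells, hc]), fun i j hj => absurd hj (by simp [← YoungDiagram.mem_cells, hc])⟩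
      rw [hc, h]
      simp only [Finset.coe_empty]
      rw [Set.Icc_eq_empty (by omega)]
      exact Set.bijOn_empty _
  haveI : Unique {T : ℕ × ℕ → ℕ // IsSYT μ T} :=
    { default := ⟨fun _ => 0, (key _).mpr rfl⟩
      uniq := fun T => Subtype.ext ((key T.1).mp T.2) }
  exact Nat.card_unique

theorem nat_card_sigma {ι : Type} [Fintype ι] (G : ι → Type) [∀ i, Finite (G i)] :
    Nat.card (Σ i, G i) = ∑ i, Nat.card (G i) := by
  haveI : ∀ i, Fintype (G i) := fun i => Fintype.ofFinite _
  simp [Nat.card_eq_fintype_card, Fintype.card_sigma]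

theorem fS_eq_sum_fc (μ : YoungDiagram) (hn : 1 ≤ μ.card) :
    fS μ = ∑ x ∈ μ.cells, fc μ x μ.card := by
  classical
  haveI := finite_syt μ
  have hpos : ∀ T : {T : ℕ × ℕ → ℕ // IsSYT μ T}, ∃ y : ℕ × ℕ, y ∈ μ.cells ∧ T.1 y = μ.card := by
    intro T
    obtain ⟨y, hy, hy2⟩ := T.2.1.surjOn (Set.mem_Icc.mpr ⟨hn, le_rfl⟩)
    exact ⟨y, Finset.mem_coe.mp hy, hy2⟩
  let pos : {T : ℕ × ℕ → ℕ // IsSYT μ T} → ↑μ.cells :=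
    fun T => ⟨(hpos T).choose, (hpos T).choose_spec.1⟩
  have hfiber : ∀ y : ↑μ.cells,
      {T : {T : ℕ × ℕ → ℕ // IsSYT μ T} // pos T = y}
        ≃ {T : ℕ × ℕ → ℕ // IsSYT μ T ∧ T y.1 = μ.card} := by
    intro y
    refine ⟨fun T => ⟨T.1.1, T.1.2, ?_⟩, fun T => ⟨⟨T.1, T.2.1⟩, ?_⟩, ?_, ?_⟩
    · have h2 := (hpos T.1).choose_spec.2
      have h3 : (hpos T.1).choose = (y : ℕ × ℕ) := congrArg Subtype.val T.2
      rwa [h3] at h2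
    · have hc := (hpos ⟨T.1, T.2.1⟩).choose_spec
      refine Subtype.ext (T.2.1.1.2.1 (Finset.mem_coe.mpr hc.1) (Finset.mem_coe.mpr y.2) ?_)
      rw [hc.2, T.2.2]
    · intro T
      exact Subtype.ext (Subtype.ext rfl)
    · intro T
      exact Subtype.ext rfl
  haveI : ∀ (y : ↑μ.cells), Finite {T : ℕ × ℕ → ℕ // IsSYT μ T ∧ T y.1 = μ.card} :=
    fun y => finite_syt' μ y.1 μ.card
  haveI : ∀ y : ↑μ.cells, Finite {T : {T : ℕ × ℕ → ℕ // IsSYT μ T} // pos T = y} :=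
    fun y => Finite.of_equiv _ (hfiber y).symm
  have h1 : Nat.card {T : ℕ × ℕ → ℕ // IsSYT μ T}
      = ∑ y : ↑μ.cells, Nat.card {T : {T : ℕ × ℕ → ℕ // IsSYT μ T} // pos T = y} := by
    rw [← Nat.card_congr (Equiv.sigmaFiberEquiv pos), nat_card_sigma]
  rw [fS, h1]
  have h2 : ∀ y : ↑μ.cells, Nat.card {T : {T : ℕ × ℕ → ℕ // IsSYT μ T} // pos T = y}
      = fc μ y.1 μ.card := fun y => Nat.card_congr (hfiber y)
  rw [Finset.sum_congr rfl (fun y _ => h2 y)]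
  exact Finset.sum_attach μ.cells fun x => fc μ x μ.card

theorem fc_eq_zero (μ : YoungDiagram) (x : ℕ × ℕ)
    (h : (x.1 + 1, x.2) ∈ μ ∨ (x.1, x.2 + 1) ∈ μ) : fc μ x μ.card = 0 := by
  have : IsEmpty {T : ℕ × ℕ → ℕ // IsSYT μ T ∧ T x = μ.card} := by
    constructor
    rintro ⟨T, hT, hTx⟩
    rcases h with h | h
    · have hlt := hT.2.2.2 x.1 x.2 h
      have hmem := hT.1.mapsTo (Finset.mem_coe.mpr (YoungDiagram.mem_cells _ |>.mpr h))
      rw [Set.mem_Icc] at hmem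
      rw [Prod.mk.eta, hTx] at hlt
      omega
    · have hlt := hT.2.2.1 x.1 x.2 h
      have hmem := hT.1.mapsTo (Finset.mem_coe.mpr (YoungDiagram.mem_cells _ |>.mpr h))
      rw [Set.mem_Icc] at hmem
      rw [Prod.mk.eta, hTx] at hlt
      omega
  simp [fc, Nat.card_of_isEmpty]

end SYT

section Corner

variable {μ : YoungDiagram} {x : ℕ × ℕ}

theorem isSYT_downgrade (h1 : (x.1 + 1, x.2) ∉ μ) (h2 : (x.1, x.2 + 1) ∉ μ)
    (hx : x ∈ μ) (T : ℕ × ℕ → ℕ) (hT : IsSYT μ T) (hTx : T x = μ.card) :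
    IsSYT (eraseC μ x h1 h2) (Function.update T x 0) := by
  classical
  obtain ⟨hbij, hzero, hrow, hcol⟩ := hT
  have hcard : (eraseC μ x h1 h2).card = μ.card - 1 := card_eraseC hx
  have hn1 : 1 ≤ μ.card := by
    have := hbij.mapsTo (Finset.mem_coe.mpr (YoungDiagram.mem_cells x |>.mpr hx))
    rw [Set.mem_Icc] at this
    omega
  have hmem' : ∀ y : ℕ × ℕ, y ∈ (eraseC μ x h1 h2).cells ↔ y ∈ μ ∧ y ≠ x := fun y => mem_eraseC
  have hup : ∀ y : ℕ × ℕ, y ∈ (eraseC μ x h1 h2).cells → Function.update T x 0 y = T y := by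
    intro y hy
    rw [Function.update_of_ne ((hmem' y).mp hy).2]
  refine ⟨?_, ?_, ?_, ?_⟩
  · rw [hcard]
    refine ⟨?_, ?_, ?_⟩
    · intro y hy
      rw [Finset.mem_coe] at hy
      rw [hup y hy]
      obtain ⟨hyμ, hyx⟩ := (hmem' y).mp hy
      have hb := hbij.mapsTo (Finset.mem_coe.mpr (YoungDiagram.mem_cells y |>.mpr hyμ))
      rw [Set.mem_Icc] at hb
      have hne : T y ≠ μ.card := by
        intro hc
        exact hyx (hbij.injOn (Finset.mem_coe.mpr (YoungDiagram.mem_cells y |>.mpr hyμ))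
          (Finset.mem_coe.mpr (YoungDiagram.mem_cells x |>.mpr hx)) (hc.trans hTx.symm))
      rw [Set.mem_Icc]
      omega
    · intro a ha b hb hab
      rw [Finset.mem_coe] at ha hb
      rw [hup a ha, hup b hb] at hab
      exact hbij.injOn (Finset.mem_coe.mpr (YoungDiagram.mem_cells a |>.mpr ((hmem' a).mp ha).1))
        (Finset.mem_coe.mpr (YoungDiagram.mem_cells b |>.mpr ((hmem' b).mp hb).1)) hab
    · intro k hk
      rw [Set.mem_Icc] at hk
      obtain ⟨y, hy, hy2⟩ := hbij.surjOn (Set.mem_Icc.mpr ⟨hk.1, by omega⟩)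
      rw [Finset.mem_coe] at hy
      have hyx : y ≠ x := by
        intro hc
        rw [hc, hTx] at hy2
        omega
      have hyE : y ∈ (eraseC μ x h1 h2).cells := (hmem' y).mpr ⟨(YoungDiagram.mem_cells y).mp hy, hyx⟩
      exact ⟨y, Finset.mem_coe.mpr hyE, by rw [hup y hyE]; exact hy2⟩
  · intro y hy
    by_cases hyx : y = x
    · rw [hyx, Function.update_self]
    · rw [Function.update_of_ne hyx]
      refine hzero y fun hc => hy ?_
      exact (hmem' y).mpr ⟨(YoungDiagram.mem_cells y).mp hc, hyx⟩
  · intro i j hj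
    have hj' := (hmem' _).mp hj
    have hij : (i, j) ∈ (eraseC μ x h1 h2).cells := by
      refine (hmem' _).mpr ⟨μ.up_left_mem le_rfl (by omega) hj'.1, ?_⟩
      intro hc
      apply h2
      rw [← hc]
      exact hj'.1
    rw [hup _ hij, hup _ hj]
    exact hrow i j hj'.1
  · intro i j hj
    have hj' := (hmem' _).mp hj
    have hij : (i, j) ∈ (eraseC μ x h1 h2).cells := by
      refine (hmem' _).mpr ⟨μ.up_left_mem (by omega) le_rfl hj'.1, ?_⟩
      intro hc
      apply h1
      rw [← hc]
      exact hj'.1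
    rw [hup _ hij, hup _ hj]
    exact hcol i j hj'.1

theorem isSYT_upgrade (h1 : (x.1 + 1, x.2) ∉ μ) (h2 : (x.1, x.2 + 1) ∉ μ)
    (hx : x ∈ μ) (hn : 1 ≤ μ.card) (T : ℕ × ℕ → ℕ)
    (hT : IsSYT (eraseC μ x h1 h2) T) :
    IsSYT μ (Function.update T x μ.card) ∧ Function.update T x μ.card x = μ.card := by
  classical
  obtain ⟨hbij, hzero, hrow, hcol⟩ := hT
  have hcard : (eraseC μ x h1 h2).card = μ.card - 1 := card_eraseC hx
  rw [hcard] at hbij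
  have hmem' : ∀ y : ℕ × ℕ, y ∈ (eraseC μ x h1 h2).cells ↔ y ∈ μ ∧ y ≠ x := fun y => mem_eraseC
  have hxE : x ∉ (eraseC μ x h1 h2).cells := fun hc => ((hmem' x).mp hc).2 rfl
  have hup : ∀ y : ℕ × ℕ, y ≠ x → Function.update T x μ.card y = T y :=
    fun y hy => Function.update_of_ne hy _ _
  have hbound : ∀ y : ℕ × ℕ, y ∈ μ → y ≠ x → 1 ≤ T y ∧ T y ≤ μ.card - 1 := by
    intro y hy hyx
    have := hbij.mapsTo (Finset.mem_coe.mpr ((hmem' y).mpr ⟨hy, hyx⟩))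
    rwa [Set.mem_Icc] at this
  refine ⟨⟨⟨?_, ?_, ?_⟩, ?_, ?_, ?_⟩, Function.update_self x μ.card T⟩
  · intro y hy
    rw [Finset.mem_coe, YoungDiagram.mem_cells] at hy
    by_cases hyx : y = x
    · rw [hyx, Function.update_self, Set.mem_Icc]
      omega
    · rw [hup y hyx, Set.mem_Icc]
      have := hbound y hy hyx
      omega
  · intro a ha b hb hab
    rw [Finset.mem_coe, YoungDiagram.mem_cells] at ha hb
    by_cases hax : a = x <;> by_cases hbx : b = x
    · rw [hax, hbx]
    · rw [hax, Function.update_self, hup b hbx] at hab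
      have := hbound b hb hbx
      omega
    · rw [hbx, Function.update_self, hup a hax] at hab
      have := hbound a ha hax
      omega
    · rw [hup a hax, hup b hbx] at hab
      have := hbij.injOn (Finset.mem_coe.mpr ((hmem' a).mpr ⟨ha, hax⟩))
        (Finset.mem_coe.mpr ((hmem' b).mpr ⟨hb, hbx⟩)) hab
      exact this
  · intro k hk
    rw [Set.mem_Icc] at hk
    by_cases hkn : k = μ.card
    · refine ⟨x, Finset.mem_coe.mpr ((YoungDiagram.mem_cells x).mpr hx), ?_⟩
      rw [Function.update_self, hkn]
    · obtain ⟨y, hy, hy2⟩ := hbij.surjOn (Set.mem_Icc.mpr ⟨hk.1, by omega⟩)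
      rw [Finset.mem_coe] at hy
      have hyx : y ≠ x := fun hc => hxE (hc ▸ hy)
      refine ⟨y, Finset.mem_coe.mpr ((YoungDiagram.mem_cells y).mpr ((hmem' y).mp hy).1), ?_⟩
      rw [hup y hyx]
      exact hy2
  · intro y hy
    have hyx : y ≠ x := fun hc => hy (hc ▸ (YoungDiagram.mem_cells x).mpr hx)
    rw [hup y hyx]
    refine hzero y fun hc => hy ?_
    exact (YoungDiagram.mem_cells y).mpr ((hmem' y).mp hc).1
  · intro i j hj
    by_cases hjx : (i, j + 1) = x
    · have hij : (i, j) ∈ μ := μ.up_left_mem le_rfl (by omega) hj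
      have hijx : (i, j) ≠ x := by
        intro hc
        rw [← hc] at hjx
        exact absurd (congrArg Prod.snd hjx) (by simp)
      rw [hjx, Function.update_self, hup _ hijx]
      have := hbound (i, j) hij hijx
      have hn' := hn
      omega
    · have hijx : (i, j) ≠ x := by
        intro hc
        exact h2 (by rw [← hc]; exact hj)
      rw [hup _ hjx, hup _ hijx]
      exact hrow i j ((hmem' _).mpr ⟨hj, hjx⟩)
  · intro i j hj
    by_cases hjx : (i + 1, j) = x
    · have hij : (i, j) ∈ μ := μ.up_left_mem (by omega) le_rfl hj
      have hijx : (i, j) ≠ x := by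
        intro hc
        rw [← hc] at hjx
        exact absurd (congrArg Prod.fst hjx) (by simp)
      rw [hjx, Function.update_self, hup _ hijx]
      have := hbound (i, j) hij hijx
      omega
    · have hijx : (i, j) ≠ x := by
        intro hc
        exact h1 (by rw [← hc]; exact hj)
      rw [hup _ hjx, hup _ hijx]
      exact hcol i j ((hmem' _).mpr ⟨hj, hjx⟩)

theorem fc_corner (h1 : (x.1 + 1, x.2) ∉ μ) (h2 : (x.1, x.2 + 1) ∉ μ)
    (hx : x ∈ μ) (hn : 1 ≤ μ.card) :
    fc μ x μ.card = fS (eraseC μ x h1 h2) := by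
  classical
  refine Nat.card_congr ⟨fun T => ⟨Function.update T.1 x 0,
      isSYT_downgrade h1 h2 hx T.1 T.2.1 T.2.2⟩,
    fun T => ⟨Function.update T.1 x μ.card,
      (isSYT_upgrade h1 h2 hx hn T.1 T.2).1, (isSYT_upgrade h1 h2 hx hn T.1 T.2).2⟩, ?_, ?_⟩
  · rintro ⟨T, hT, hTx⟩
    apply Subtype.ext
    simp only
    rw [Function.update_idem, ← hTx, Function.update_eq_self]
  · rintro ⟨T, hT⟩
    apply Subtype.ext
    simp only
    have hTx : T x = 0 := hT.2.1 x (fun hc => (mem_eraseC.mp hc).2 rfl)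
    rw [Function.update_idem, ← hTx, Function.update_eq_self]

end Corner

/-- Rows containing a removable corner. -/
def RS (μ : YoungDiagram) (M : ℕ) : Finset ℕ :=
  (range M).filter (fun r => μ.rowLen (r+1) < μ.rowLen r)

theorem Dl_congr {M : ℕ} {v w : ℕ → ℚ} (h : ∀ i ∈ range M, v i = w i) : Dl M v = Dl M w := by
  refine prod_congr rfl fun j hj => prod_congr rfl fun i hi => ?_
  rw [mem_range] at hj hi
  rw [h i (mem_range.mpr (by omega)), h j (mem_range.mpr (by omega))]

theorem corner_filter (μ : YoungDiagram) (M : ℕ) (hM : μ.colLen 0 ≤ M) :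
    μ.cells.filter (fun x => (x.1 + 1, x.2) ∉ μ ∧ (x.1, x.2 + 1) ∉ μ)
      = (RS μ M).image (fun r => (r, μ.rowLen r - 1)) := by
  ext ⟨i, j⟩
  simp only [mem_filter, mem_image, mem_range, YoungDiagram.mem_cells, RS]
  constructor
  · rintro ⟨hmem, hc1, hc2⟩
    have hj : j < μ.rowLen i := YoungDiagram.mem_iff_lt_rowLen.mp hmem
    have hrow : μ.rowLen i = j + 1 := corner_rowLen hmem hc2
    have hlt : μ.rowLen (i+1) ≤ j := by
      by_contra hcon
      exact hc1 (YoungDiagram.mem_iff_lt_rowLen.mpr (by omega))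
    have hiM : i < M := by
      have := row_mem_lt hmem
      omega
    refine ⟨i, ⟨hiM, by omega⟩, ?_⟩
    have : μ.rowLen i - 1 = j := by omega
    rw [this]
  · rintro ⟨r, ⟨hrM, hlt⟩, heq⟩
    have hρ : 1 ≤ μ.rowLen r := by omega
    obtain ⟨rfl, rfl⟩ : r = i ∧ μ.rowLen r - 1 = j := by
      have h1 := congrArg Prod.fst heq
      have h2 := congrArg Prod.snd heq
      simp only at h1 h2
      exact ⟨h1, h2⟩
    refine ⟨YoungDiagram.mem_iff_lt_rowLen.mpr (by omega), ?_, ?_⟩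
    · intro hcon
      have := YoungDiagram.mem_iff_lt_rowLen.mp hcon
      omega
    · intro hcon
      have := YoungDiagram.mem_iff_lt_rowLen.mp hcon
      omega

theorem sum_fc_corners (μ : YoungDiagram) (M : ℕ) (hM : μ.colLen 0 ≤ M) :
    ∑ x ∈ μ.cells, fc μ x μ.card
      = ∑ r ∈ RS μ M, fc μ (r, μ.rowLen r - 1) μ.card := by
  classical
  rw [← Finset.sum_filter_add_sum_filter_not μ.cells
    (fun x => (x.1 + 1, x.2) ∉ μ ∧ (x.1, x.2 + 1) ∉ μ)]
  have h2 : ∑ x ∈ μ.cells.filter (fun x => ¬((x.1 + 1, x.2) ∉ μ ∧ (x.1, x.2 + 1) ∉ μ)),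
      fc μ x μ.card = 0 := by
    refine sum_eq_zero fun x hx => ?_
    rw [mem_filter] at hx
    refine fc_eq_zero μ x ?_
    by_cases hA : (x.1 + 1, x.2) ∈ μ
    · exact Or.inl hA
    · refine Or.inr ?_
      by_contra hB
      exact hx.2 ⟨hA, hB⟩
  rw [h2, Nat.add_zero, corner_filter μ M hM, sum_image]
  intro a ha b hb hab
  exact congrArg Prod.fst hab

theorem vanish (μ : YoungDiagram) (M : ℕ) (hM : μ.colLen 0 ≤ M) (r : ℕ)
    (hrM : r < M) (hr : r ∉ RS μ M) :
    Lq μ M r * Dl M (fun i => if i = r then Lq μ M r - 1 else Lq μ M i) = 0 := by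
  have hnot : ¬ μ.rowLen (r+1) < μ.rowLen r := by
    intro hcon
    exact hr (mem_filter.mpr ⟨mem_range.mpr hrM, hcon⟩)
  have hanti : μ.rowLen (r+1) ≤ μ.rowLen r := μ.rowLen_anti r (r+1) (by omega)
  have heqrow : μ.rowLen (r+1) = μ.rowLen r := by omega
  rcases Nat.lt_or_ge (r+1) M with hr1 | hr1
  · -- zero factor in Dl
    have hzero : (fun i => if i = r then Lq μ M r - 1 else Lq μ M i) r
        - (fun i => if i = r then Lq μ M r - 1 else Lq μ M i) (r+1) = 0 := by
      simp only [if_pos rfl, if_neg (by omega : ¬ r + 1 = r)]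
      have e1 : Ln μ M r = μ.rowLen r + (M - 1 - r) := rfl
      have e2 : Ln μ M (r+1) = μ.rowLen (r+1) + (M - 1 - (r+1)) := rfl
      rw [Lq, Lq, e1, e2, heqrow]
      have h3 : μ.rowLen r + (M - 1 - r) = (μ.rowLen r + (M - 1 - (r+1))) + 1 := by omega
      rw [h3]
      push_cast
      ring
    have : Dl M (fun i => if i = r then Lq μ M r - 1 else Lq μ M i) = 0 := by
      rw [Dl]
      refine prod_eq_zero (mem_range.mpr hr1) ?_
      exact prod_eq_zero (mem_range.mpr (by omega : r < r + 1)) hzero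
    rw [this, mul_zero]
  · -- r = M - 1 and the row is empty
    have hrow0 : μ.rowLen r = 0 := by
      by_contra hcon
      have : 1 ≤ μ.rowLen (r+1) := by omega
      have hmem : (r+1, 0) ∈ μ := YoungDiagram.mem_iff_lt_rowLen.mpr (by omega)
      have := row_mem_lt hmem
      omega
    have : Lq μ M r = 0 := by
      have e1 : Ln μ M r = μ.rowLen r + (M - 1 - r) := rfl
      rw [Lq, e1, hrow0]
      have : M - 1 - r = 0 := by omega
      rw [this]
      norm_num
    rw [this, zero_mul]

theorem main_hlf : ∀ n : ℕ, ∀ μ : YoungDiagram, μ.card = n → ∀ M : ℕ, μ.colLen 0 ≤ M →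
    (fS μ : ℚ) * ∏ i ∈ range M, ((Ln μ M i).factorial : ℚ)
      = (n.factorial : ℚ) * Dl M (Lq μ M) := by
  intro n
  induction n using Nat.strong_induction_on with
  | _ n IH =>
    intro μ hcard M hM
    rcases Nat.eq_zero_or_pos n with rfl | hn
    · -- base case: empty diagram
      rw [fS_of_card_zero μ hcard]
      have hempty : μ.cells = ∅ := Finset.card_eq_zero.mp hcard
      have := hook_prod_Dl μ M hM
      rw [hempty, Finset.prod_empty, one_mul] at this
      rw [← this]
      norm_num
    · -- inductive step
      have hn1 : 1 ≤ μ.card := by omega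
      have key : ∀ r ∈ RS μ M,
          (fc μ (r, μ.rowLen r - 1) μ.card : ℚ) * ∏ i ∈ range M, ((Ln μ M i).factorial : ℚ)
            = ((n-1).factorial : ℚ) *
              (Lq μ M r * Dl M (fun i => if i = r then Lq μ M r - 1 else Lq μ M i)) := by
        intro r hr
        simp only [RS, mem_filter, mem_range] at hr
        obtain ⟨hrM, hlt⟩ := hr
        have hρ : 1 ≤ μ.rowLen r := by omega
        set x : ℕ × ℕ := (r, μ.rowLen r - 1) with hx
        have hxmem : x ∈ μ := YoungDiagram.mem_iff_lt_rowLen.mpr (by omega)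
        have hx1 : (x.1 + 1, x.2) ∉ μ := by
          intro hcon
          have := YoungDiagram.mem_iff_lt_rowLen.mp hcon
          simp only [hx] at this
          omega
        have hx2 : (x.1, x.2 + 1) ∉ μ := by
          intro hcon
          have := YoungDiagram.mem_iff_lt_rowLen.mp hcon
          simp only [hx] at this
          omega
        set ν : YoungDiagram := eraseC μ x hx1 hx2 with hν
        have hνcard : ν.card = n - 1 := by rw [hν, card_eraseC hxmem, hcard]
        have hνcol : ν.colLen 0 ≤ M := le_trans colLen_zero_eraseC_le hM
        have hLν : ∀ i, i < M → Ln ν M i = if i = r then Ln μ M r - 1 else Ln μ M i := by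
          intro i hi
          have := rowLen_eraseC (μ := μ) (c := x) (h1 := hx1) (h2 := hx2) hxmem i
          have e1 : Ln ν M i = ν.rowLen i + (M - 1 - i) := rfl
          have e2 : Ln μ M i = μ.rowLen i + (M - 1 - i) := rfl
          have e3 : Ln μ M r = μ.rowLen r + (M - 1 - r) := rfl
          rw [e1, this]
          simp only [hx]
          split_ifs with h
          · subst h
            rw [e3]
            omega
          · rw [e2]
        -- factorial product relation
        have hprod : ∏ i ∈ range M, ((Ln μ M i).factorial : ℚ)
            = (Ln μ M r : ℚ) * ∏ i ∈ range M, ((Ln ν M i).factorial : ℚ) := by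
          rw [← Finset.mul_prod_erase (range M) _ (mem_range.mpr hrM),
            ← Finset.mul_prod_erase (range M) (fun i => ((Ln ν M i).factorial : ℚ))
              (mem_range.mpr hrM)]
          have h1 : (Ln ν M r).factorial = (Ln μ M r - 1).factorial := by
            rw [hLν r hrM, if_pos rfl]
          have h2 : ∀ i ∈ (range M).erase r,
              ((Ln ν M i).factorial : ℚ) = ((Ln μ M i).factorial : ℚ) := by
            intro i hi
            rw [mem_erase] at hi
            rw [hLν i (mem_range.mp hi.2), if_neg hi.1]
          rw [h1, prod_congr rfl h2]
          have hLr : 1 ≤ Ln μ M r := by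
            have : Ln μ M r = μ.rowLen r + (M - 1 - r) := rfl
            omega
          have : (Ln μ M r).factorial = Ln μ M r * (Ln μ M r - 1).factorial := by
            have e : Ln μ M r = (Ln μ M r - 1) + 1 := by omega
            rw [e, Nat.factorial_succ]
            congr 1 <;> omega
          rw [this]
          push_cast
          ring
        -- Dl relation
        have hDl : Dl M (Lq ν M) = Dl M (fun i => if i = r then Lq μ M r - 1 else Lq μ M i) := by
          refine Dl_congr fun i hi => ?_
          rw [mem_range] at hi
          rw [Lq, hLν i hi]
          split_ifs with h
          · have hLr : 1 ≤ Ln μ M r := by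
              have : Ln μ M r = μ.rowLen r + (M - 1 - r) := rfl
              omega
            rw [Nat.cast_sub hLr]
            rfl
          · rfl
        have hfc : fc μ x μ.card = fS ν := fc_corner hx1 hx2 hxmem hn1
        have hIH := IH (n-1) (by omega) ν hνcard M hνcol
        rw [hfc, hprod]
        have : (fS ν : ℚ) * ((Ln μ M r : ℚ) * ∏ i ∈ range M, ((Ln ν M i).factorial : ℚ))
            = (Ln μ M r : ℚ) * ((fS ν : ℚ) * ∏ i ∈ range M, ((Ln ν M i).factorial : ℚ)) := by
          ring
        rw [this, hIH, hDl]
        rw [Lq]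
        ring
      -- assemble
      have hsum : (fS μ : ℚ) = ∑ r ∈ RS μ M, (fc μ (r, μ.rowLen r - 1) μ.card : ℚ) := by
        rw [fS_eq_sum_fc μ hn1, sum_fc_corners μ M hM]
        push_cast
        rfl
      have step1 : (fS μ : ℚ) * ∏ i ∈ range M, ((Ln μ M i).factorial : ℚ)
          = ∑ r ∈ RS μ M, ((n-1).factorial : ℚ) *
              (Lq μ M r * Dl M (fun i => if i = r then Lq μ M r - 1 else Lq μ M i)) := by
        rw [hsum, sum_mul]
        exact sum_congr rfl key
      rw [step1, ← mul_sum]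
      have hext : ∑ r ∈ RS μ M,
          Lq μ M r * Dl M (fun i => if i = r then Lq μ M r - 1 else Lq μ M i)
          = ∑ r ∈ range M,
            Lq μ M r * Dl M (fun i => if i = r then Lq μ M r - 1 else Lq μ M i) := by
        refine sum_subset (filter_subset _ _) ?_
        intro r hrM hr
        exact vanish μ M hM r (mem_range.mp hrM) hr
      rw [hext]
      have hstar := star_identity M (Lq μ M) (Lq_injOn μ M)
      have hLqstar : ∀ r ∈ range M,
          Lq μ M r * Dl M (fun i => if i = r then Lq μ M r - 1 else Lq μ M i)
            = Lq μ M r * Dl M (fun i => if i = r then Lq μ M i - 1 else Lq μ M i) := by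
        intro r hr
        congr 1
        exact Dl_congr fun i hi => by split_ifs with h <;> simp [h]
      rw [sum_congr rfl hLqstar]
      have hstar' : ∑ r ∈ range M, Lq μ M r * Dl M (fun i => if i = r then Lq μ M i - 1 else Lq μ M i)
          = ((∑ i ∈ range M, Lq μ M i) - ((M.choose 2 : ℕ) : ℚ)) * Dl M (Lq μ M) := by
        rw [← hstar]
        refine sum_congr rfl fun r hr => ?_
        congr 1
        exact Dl_congr fun i hi => by split_ifs with h <;> simp [h]
      rw [hstar', sum_Lq μ M hM, hcard]
      have : ((n : ℚ) + ((M.choose 2 : ℕ) : ℚ)) - ((M.choose 2 : ℕ) : ℚ) = (n : ℚ) := by ring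
      rw [this]
      have hfact : ((n-1).factorial : ℚ) * (n : ℚ) = (n.factorial : ℚ) := by
        have e : n = (n - 1) + 1 := by omega
        have hℕ : n.factorial = n * (n-1).factorial := by
          conv_lhs => rw [e]
          rw [Nat.factorial_succ, ← e]
        rw [hℕ]
        push_cast
        ring
      rw [← mul_assoc, hfact]

end Aux

/-- The case k = n of the drop function formula: d(n,x) = (Π h(y))·f(n,x), and summing
over all cells recovers n! = (Π h(y))·f_μ. -/
theorem stmt8 (μ : YoungDiagram) (hn : 1 ≤ μ.card) (d : ℕ × ℕ → ℕ → ℚ)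
    (hd : ∀ x ∈ μ.cells, ∀ k, 1 ≤ k → k ≤ μ.card →
      d x k = (∏ y ∈ μ.cells, (hook μ y : ℚ)) / ((μ.card : ℚ) - k + 1) *
        ∑ l ∈ Finset.Icc k μ.card, (fc μ x l : ℚ)) :
    (∀ x ∈ μ.cells, d x μ.card = (∏ y ∈ μ.cells, (hook μ y : ℚ)) * (fc μ x μ.card : ℚ)) ∧
    (Nat.factorial μ.card : ℚ) = (∏ y ∈ μ.cells, (hook μ y : ℚ)) * (fS μ : ℚ) := by
  constructor
  · intro x hx
    rw [hd x hx μ.card hn le_rfl, Finset.Icc_self, Finset.sum_singleton]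
    have h1 : (μ.card : ℚ) - (μ.card : ℚ) + 1 = 1 := by ring
    rw [h1, div_one]
  · have hmain := main_hlf μ.card μ rfl (μ.colLen 0) le_rfl
    have hprod := hook_prod_Dl μ (μ.colLen 0) le_rfl
    have hD : Dl (μ.colLen 0) (Lq μ (μ.colLen 0)) ≠ 0 := (Dl_Lq_pos μ (μ.colLen 0)).ne'
    rw [← hprod] at hmain
    have : ((∏ y ∈ μ.cells, (hook μ y : ℚ)) * (fS μ : ℚ)) * Dl (μ.colLen 0) (Lq μ (μ.colLen 0))
        = (μ.card.factorial : ℚ) * Dl (μ.colLen 0) (Lq μ (μ.colLen 0)) := by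
      rw [← hmain]
      ring
    exact (mul_right_cancel₀ hD this).symm

end NPS
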